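/- Define Q(b) = B1(b) + B2(b) + B3(b) for b ∈ ℝ. Then Q is strictly decreasing on ℝ, Q(b) → −∞ as b → ∞, Q(0) > 0 if and only if −γ1γ2γ3 + η(−γ1γ2 + γ2γ3 + γ3γ1) > 0, and consequently there exists a unique b > 0 with Q(b) = 0 if and only if −γ1γ2γ3 + η(−γ1γ2 + γ2γ3 + γ3γ1) > 0. -/

import Mathlib

/-- `Q = B1 + B2 + B3` is strictly decreasing, tends to `-∞` at `+∞`,
`Q(0) > 0` iff `-γ1γ2γ3 + η(-γ1γ2 + γ2γ3 + γ3γ1) > 0`, and there is a unique `b > 0` with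
`Q(b) = 0` iff `-γ1γ2γ3 + η(-γ1γ2 + γ2γ3 + γ3γ1) > 0`. -/
theorem stmt_14 (η γ1 γ2 γ3 : ℝ)
    (h1 : 0 < γ1) (h2 : γ1 < η) (h3 : η < γ2) (h4 : 0 < γ3)
    (B1 B2 B3 : ℝ → ℝ)
    (hB1 : ∀ b : ℝ, B1 b = Real.exp (-γ1 * b) / η *
      (γ2 * γ3 * (η - γ1) / (γ1 * (γ2 - γ1) * (γ1 + γ3))))
    (hB2 : ∀ b : ℝ, B2 b = Real.exp (-γ2 * b) / η *
      (γ3 * γ1 * (γ2 - η) / (γ2 * (γ2 + γ3) * (γ2 - γ1))))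
    (hB3 : ∀ b : ℝ, B3 b = -(Real.exp (γ3 * b) / η *
      (γ1 * γ2 * (η + γ3) / (γ3 * (γ1 + γ3) * (γ2 + γ3)))))
    (Q : ℝ → ℝ) (hQ : ∀ b : ℝ, Q b = B1 b + B2 b + B3 b) :
    StrictAnti Q ∧
    Filter.Tendsto Q Filter.atTop Filter.atBot ∧
    (0 < Q 0 ↔ 0 < -(γ1 * γ2 * γ3) + η * (-(γ1 * γ2) + γ2 * γ3 + γ3 * γ1)) ∧
    ((∃! b : ℝ, 0 < b ∧ Q b = 0) ↔
      0 < -(γ1 * γ2 * γ3) + η * (-(γ1 * γ2) + γ2 * γ3 + γ3 * γ1)) := by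
  have hη : 0 < η := h1.trans h2
  have hg2 : 0 < γ2 := hη.trans h3
  have h21 : 0 < γ2 - γ1 := by linarith
  have h13 : 0 < γ1 + γ3 := by linarith
  have h23 : 0 < γ2 + γ3 := by linarith
  set a1 : ℝ := γ2 * γ3 * (η - γ1) / (γ1 * (γ2 - γ1) * (γ1 + γ3)) / η with ha1
  set a2 : ℝ := γ3 * γ1 * (γ2 - η) / (γ2 * (γ2 + γ3) * (γ2 - γ1)) / η with ha2
  set a3 : ℝ := γ1 * γ2 * (η + γ3) / (γ3 * (γ1 + γ3) * (γ2 + γ3)) / η with ha3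
  have ha1p : 0 < a1 :=
    div_pos (div_pos (mul_pos (mul_pos hg2 h4) (by linarith))
      (mul_pos (mul_pos h1 h21) h13)) hη
  have ha2p : 0 < a2 :=
    div_pos (div_pos (mul_pos (mul_pos h4 h1) (by linarith))
      (mul_pos (mul_pos hg2 h23) h21)) hη
  have ha3p : 0 < a3 :=
    div_pos (div_pos (mul_pos (mul_pos h1 hg2) (by linarith))
      (mul_pos (mul_pos h4 h13) h23)) hη
  have hQ' : ∀ b : ℝ, Q b = Real.exp (-γ1 * b) * a1 + Real.exp (-γ2 * b) * a2
      - Real.exp (γ3 * b) * a3 := by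
    intro b
    rw [hQ, hB1, hB2, hB3, ha1, ha2, ha3]
    ring
  have hanti : StrictAnti Q := by
    intro x y hxy
    rw [hQ' x, hQ' y]
    have e1 : Real.exp (-γ1 * y) < Real.exp (-γ1 * x) := by
      apply Real.exp_lt_exp.2; nlinarith
    have e2 : Real.exp (-γ2 * y) < Real.exp (-γ2 * x) := by
      apply Real.exp_lt_exp.2; nlinarith
    have e3 : Real.exp (γ3 * x) < Real.exp (γ3 * y) := by
      apply Real.exp_lt_exp.2; nlinarith
    have := mul_lt_mul_of_pos_right e1 ha1p
    have := mul_lt_mul_of_pos_right e2 ha2p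
    have := mul_lt_mul_of_pos_right e3 ha3p
    linarith
  have htend : Filter.Tendsto Q Filter.atTop Filter.atBot := by
    have key : Filter.Tendsto (fun b => Real.exp (-γ1 * b) * a1 + Real.exp (-γ2 * b) * a2
        - Real.exp (γ3 * b) * a3) Filter.atTop Filter.atBot := by
      have t1 : Filter.Tendsto (fun b : ℝ => Real.exp (-γ1 * b) * a1) Filter.atTop (nhds 0) := by
        have : Filter.Tendsto (fun b : ℝ => Real.exp (-γ1 * b)) Filter.atTop (nhds 0) := by
          apply Real.tendsto_exp_atBot.comp
          exact Filter.Tendsto.const_mul_atTop_of_neg (neg_neg_iff_pos.2 h1) Filter.tendsto_id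
        simpa using this.mul_const a1
      have t2 : Filter.Tendsto (fun b : ℝ => Real.exp (-γ2 * b) * a2) Filter.atTop (nhds 0) := by
        have : Filter.Tendsto (fun b : ℝ => Real.exp (-γ2 * b)) Filter.atTop (nhds 0) := by
          apply Real.tendsto_exp_atBot.comp
          exact Filter.Tendsto.const_mul_atTop_of_neg (neg_neg_iff_pos.2 hg2) Filter.tendsto_id
        simpa using this.mul_const a2
      have t3 : Filter.Tendsto (fun b : ℝ => Real.exp (γ3 * b) * a3) Filter.atTop Filter.atTop := by
        have h : Filter.Tendsto (fun b : ℝ => Real.exp (γ3 * b)) Filter.atTop Filter.atTop := by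
          apply Real.tendsto_exp_atTop.comp
          exact Filter.Tendsto.const_mul_atTop h4 Filter.tendsto_id
        exact Filter.Tendsto.atTop_mul_const ha3p h
      have := (t1.add t2).add_atBot (Filter.tendsto_neg_atTop_atBot.comp t3)
      simpa [sub_eq_add_neg] using this
    have : Q = fun b => Real.exp (-γ1 * b) * a1 + Real.exp (-γ2 * b) * a2
        - Real.exp (γ3 * b) * a3 := funext hQ'
    rw [this]; exact key
  have hQ0 : Q 0 = (-(γ1 * γ2 * γ3) + η * (-(γ1 * γ2) + γ2 * γ3 + γ3 * γ1))
      / (η * γ1 * γ2 * γ3) := by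
    rw [hQ' 0]
    simp only [mul_zero, Real.exp_zero, one_mul, ha1, ha2, ha3]
    field_simp
    ring
  have hiff : 0 < Q 0 ↔ 0 < -(γ1 * γ2 * γ3) + η * (-(γ1 * γ2) + γ2 * γ3 + γ3 * γ1) := by
    rw [hQ0]
    constructor
    · intro h
      by_contra hn
      push_neg at hn
      have : (-(γ1 * γ2 * γ3) + η * (-(γ1 * γ2) + γ2 * γ3 + γ3 * γ1)) / (η * γ1 * γ2 * γ3) ≤ 0 :=
        div_nonpos_of_nonpos_of_nonneg hn (by positivity)
      linarith
    · intro h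
      apply div_pos h (by positivity)
  refine ⟨hanti, htend, hiff, ?_⟩
  constructor
  · rintro ⟨b, ⟨hb, hQb⟩, -⟩
    have h := hanti hb
    rw [hQb] at h
    exact hiff.1 h
  · intro hpos
    have hQ0pos : 0 < Q 0 := hiff.2 hpos
    obtain ⟨M, hQM, hMpos⟩ :=
      ((htend.eventually (Filter.eventually_lt_atBot 0)).and
        (Filter.eventually_gt_atTop 0)).exists
    have hcont : Continuous Q := by
      have : Q = fun b => Real.exp (-γ1 * b) * a1 + Real.exp (-γ2 * b) * a2
          - Real.exp (γ3 * b) * a3 := funext hQ'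
      rw [this]
      exact ((Real.continuous_exp.comp (continuous_const.mul continuous_id)).mul
        continuous_const).add ((Real.continuous_exp.comp
        (continuous_const.mul continuous_id)).mul continuous_const) |>.sub
        ((Real.continuous_exp.comp (continuous_const.mul continuous_id)).mul continuous_const)
    have hsub := intermediate_value_Icc' hMpos.le hcont.continuousOn
    have h0mem : (0 : ℝ) ∈ Set.Icc (Q M) (Q 0) := ⟨hQM.le, hQ0pos.le⟩
    obtain ⟨b, hbmem, hQb⟩ := hsub h0mem
    have hbpos : 0 < b := by
      rcases lt_or_eq_of_le hbmem.1 with h | h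
      · exact h
      · exfalso; rw [← h] at hQb; linarith
    exact ⟨b, ⟨hbpos, hQb⟩, fun c ⟨_, hQc⟩ => hanti.injective (hQc.trans hQb.symm)⟩
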